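/- Let μ ∈ ℂ with μ ∉ {0, 1}, a = (μ+μ⁻¹)/2, b = i(μ⁻¹−μ)/2, regarded as quaternions in the real span of 1 and i. Let n ∈ ℍ with Re n = 0 and n² = −1, φ ∈ ℍ \ {0}, T = ½(n·φ·(a−1)·φ⁻¹ + φ·b·φ⁻¹), ρ̂ = φ·((1−a)/2)·φ⁻¹, T̂ = T·ρ̂⁻¹, and set γ_∞ = (1 − conj(μ)⁻¹)/(1 − μ) ∈ ℂ. Then for all c, d ∈ ℂ (regarded as quaternions in the span of 1 and i): (T̂ + n)·(φ·c + φ·j·d) − (φ·c + φ·j·d)·i = −(φ·γ_∞·c + φ·j·d)·(2i/(1 − conj(μ)⁻¹)). (The identity T̂ + N − I = −r_∞ ∘ (2I/(1−μ̄⁻¹)) from the proof of Theorem 6.1, evaluated on the decomposition ℍ = φℂ ⊕ φjℂ.) -/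

import Mathlib

/- The identity T̂ + N − I = −r_∞ ∘ (2I/(1−μ̄⁻¹)) from the proof of
Theorem 6.1, evaluated on the decomposition ℍ = φℂ ⊕ φjℂ. -/

noncomputable section
open Complex

local notation "ℍ" => Quaternion ℝ

/-- The quaternion unit i. -/
def qi : ℍ := ⟨0,1,0,0⟩

/-- The quaternion unit j. -/
def qj : ℍ := ⟨0,0,1,0⟩

/-- Embedding of ℂ into ℍ as the real span of 1 and i. -/
def cq (z : ℂ) : ℍ := ⟨z.re, z.im, 0, 0⟩

/-- a = (μ+μ⁻¹)/2. -/
def aμ (μ : ℂ) : ℂ := (μ + μ⁻¹) / 2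

/-- b = i(μ⁻¹−μ)/2. -/
def bμ (μ : ℂ) : ℂ := Complex.I * (μ⁻¹ - μ) / 2

/-- T = ½(n·φ·(a−1)·φ⁻¹ + φ·b·φ⁻¹). -/
def Tq (μ : ℂ) (n φ : ℍ) : ℍ :=
  (n * (φ * cq (aμ μ - 1) * φ⁻¹) + φ * cq (bμ μ) * φ⁻¹) / 2

/-- ρ̂ = φ·((1−a)/2)·φ⁻¹. -/
def ρhat (μ : ℂ) (φ : ℍ) : ℍ := φ * cq ((1 - aμ μ) / 2) * φ⁻¹

/-- T̂ = T·ρ̂⁻¹. -/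
def That (μ : ℂ) (n φ : ℍ) : ℍ := Tq μ n φ * (ρhat μ φ)⁻¹

/-- γ_∞ = (1 − μ̄⁻¹)/(1 − μ). -/
def γinf (μ : ℂ) : ℂ := (1 - (starRingEnd ℂ μ)⁻¹) / (1 - μ)

@[simp] lemma cq_re (z : ℂ) : (cq z).re = z.re := rfl
@[simp] lemma cq_imI (z : ℂ) : (cq z).imI = z.im := rfl
@[simp] lemma cq_imJ (z : ℂ) : (cq z).imJ = 0 := rfl
@[simp] lemma cq_imK (z : ℂ) : (cq z).imK = 0 := rfl
@[simp] lemma qj_re : qj.re = 0 := rfl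
@[simp] lemma qj_imI : qj.imI = 0 := rfl
@[simp] lemma qj_imJ : qj.imJ = 1 := rfl
@[simp] lemma qj_imK : qj.imK = 0 := rfl

lemma cq_mul (z w : ℂ) : cq (z * w) = cq z * cq w := by
  ext <;> simp [Complex.mul_re, Complex.mul_im] <;> ring
lemma cq_add (z w : ℂ) : cq (z + w) = cq z + cq w := by
  ext <;> simp [Quaternion.re_one, Quaternion.imI_one, Quaternion.imJ_one, Quaternion.imK_one]
lemma cq_neg (z : ℂ) : cq (-z) = -cq z := by
  ext <;> simp [Quaternion.re_one, Quaternion.imI_one, Quaternion.imJ_one, Quaternion.imK_one]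
lemma cq_sub (z w : ℂ) : cq (z - w) = cq z - cq w := by
  ext <;> simp [Quaternion.re_one, Quaternion.imI_one, Quaternion.imJ_one, Quaternion.imK_one]
lemma cq_one : cq 1 = 1 := by
  ext <;> simp [Quaternion.re_one, Quaternion.imI_one, Quaternion.imJ_one, Quaternion.imK_one]
lemma cq_eq_zero {z : ℂ} : cq z = 0 ↔ z = 0 := by
  simp [Quaternion.ext_iff, Complex.ext_iff, Quaternion.re_zero, Quaternion.imI_zero, Quaternion.imJ_zero, Quaternion.imK_zero]
lemma cq_inv (z : ℂ) : cq z⁻¹ = (cq z)⁻¹ := by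
  rcases eq_or_ne z 0 with h | h
  · simp [h, show cq 0 = 0 from by ext <;> simp [Quaternion.re_zero, Quaternion.imI_zero, Quaternion.imJ_zero, Quaternion.imK_zero]]
  · exact eq_inv_of_mul_eq_one_right (by rw [← cq_mul, mul_inv_cancel₀ h, cq_one])
lemma qi_eq : qi = cq Complex.I := by ext <;> simp [qi] <;> rfl
lemma cq_qj (z : ℂ) : cq z * qj = qj * cq ((starRingEnd ℂ) z) := by
  ext <;> simp
lemma cq_qj' (z : ℂ) (x : ℍ) : cq z * (qj * x) = qj * (cq ((starRingEnd ℂ) z) * x) := by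
  rw [← mul_assoc, cq_qj, mul_assoc]
lemma cq_cq (z w : ℂ) (x : ℍ) : cq z * (cq w * x) = cq (z * w) * x := by
  rw [← mul_assoc, ← cq_mul]
lemma cq_two : cq 2 = 2 := by
  rw [show (2:ℂ) = 1 + 1 by norm_num, cq_add, cq_one]; norm_num

lemma sq_ne_one {μ : ℂ} (hμ0 : μ ≠ 0) (hμ1 : μ ≠ 1) : 1 - aμ μ ≠ 0 := by
  intro h
  apply hμ1
  have h2 : (μ - 1)^2 = 0 := by
    rw [aμ] at h
    field_simp at h
    linear_combination -h
  have := pow_eq_zero_iff (n := 2) (by norm_num) |>.1 h2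
  exact sub_eq_zero.1 this

theorem stmt_12 (μ : ℂ) (hμ0 : μ ≠ 0) (hμ1 : μ ≠ 1)
    (n : ℍ) (hre : n.re = 0) (hsq : n * n = -1)
    (φ : ℍ) (hφ : φ ≠ 0) :
    ∀ c d : ℂ,
      (That μ n φ + n) * (φ * cq c + φ * qj * cq d)
          - (φ * cq c + φ * qj * cq d) * qi
        = -((φ * cq (γinf μ) * cq c + φ * qj * cq d)
            * cq (2 * Complex.I / (1 - (starRingEnd ℂ μ)⁻¹))) := by
  intro c d
  have ha : 1 - aμ μ ≠ 0 := sq_ne_one hμ0 hμ1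
  set β : ℂ := bμ μ / (1 - aμ μ) with hβdef
  have hr : ((1 - aμ μ)/2 : ℂ) ≠ 0 := div_ne_zero ha two_ne_zero
  have hρ : ρhat μ φ ≠ 0 := by
    rw [ρhat]
    exact mul_ne_zero (mul_ne_zero hφ (cq_eq_zero.not.2 hr)) (inv_ne_zero hφ)
  have expand : Tq μ n φ = (φ * cq β * φ⁻¹ - n) * ρhat μ φ := by
    rw [Tq, ρhat]
    have e2 : n * (φ * cq (aμ μ - 1) * φ⁻¹) + φ * cq (bμ μ) * φ⁻¹
        = 2 * ((φ * cq β * φ⁻¹ - n) * (φ * cq ((1 - aμ μ) / 2) * φ⁻¹)) := by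
      have hb : cq (aμ μ - 1) = -(2 * cq ((1 - aμ μ)/2)) := by
        rw [← cq_two, ← cq_mul, ← cq_neg]
        congr 1
        field_simp; ring
      have hc : β * ((1 - aμ μ)/2) = bμ μ / 2 := by
        rw [hβdef]; field_simp
      have hb2 : cq (bμ μ) = 2 * cq (bμ μ / 2) := by
        rw [← cq_two, ← cq_mul]; congr 1; field_simp
      rw [hb, hb2]
      simp only [sub_mul, mul_assoc, inv_mul_cancel_left₀ hφ, cq_cq, ← cq_mul, hc]
      noncomm_ring
    have h2 : (2:ℍ) ≠ 0 := by rw [← cq_two]; exact cq_eq_zero.not.2 two_ne_zero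
    rw [e2, (two_mul _).trans (mul_two _).symm, mul_div_cancel_right₀ _ h2]
  have key : That μ n φ + n = φ * cq β * φ⁻¹ := by
    rw [That, expand, mul_assoc, mul_inv_cancel₀ hρ, mul_one, sub_add_cancel]
  rw [key]
  simp only [qi_eq, mul_add, add_mul, neg_add_rev, neg_mul, mul_neg, mul_assoc,
    inv_mul_cancel_left₀ hφ, cq_cq, cq_qj', ← cq_mul]
  set κ : ℂ := 2 * Complex.I / (1 - (starRingEnd ℂ μ)⁻¹) with hκdef
  have hν0 : (starRingEnd ℂ) μ ≠ 0 := star_ne_zero.2 hμ0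
  have hν1 : (starRingEnd ℂ) μ ≠ 1 := by
    intro h; apply hμ1
    have := congrArg (starRingEnd ℂ) h
    simpa using this
  have hκ : 1 - ((starRingEnd ℂ) μ)⁻¹ ≠ 0 := by
    intro h
    exact hν1 (inv_eq_one.1 (sub_eq_zero.1 h).symm)
  have h1μ : 1 - μ ≠ 0 := sub_ne_zero.2 (Ne.symm hμ1)
  have ha' : 1 - (μ + μ⁻¹)/2 ≠ 0 := by rw [← aμ]; exact ha
  have hca : 1 - ((starRingEnd ℂ) μ + ((starRingEnd ℂ) μ)⁻¹)/2 ≠ 0 := by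
    intro h; apply ha'
    have := congrArg (starRingEnd ℂ) h
    simpa [map_div₀, map_ofNat] using this
  have hμ1' : μ - 1 ≠ 0 := sub_ne_zero.2 hμ1
  have hν1' : (starRingEnd ℂ) μ - 1 ≠ 0 := sub_ne_zero.2 hν1
  have hβval : β = Complex.I * (1 + μ) / (μ - 1) := by
    rw [hβdef, bμ, aμ]
    rw [div_eq_div_iff (by rw [← aμ]; exact ha) hμ1']
    field_simp
    ring
  have hγκ : γinf μ * κ = 2 * Complex.I / (1 - μ) := by
    rw [γinf, hκdef]; exact div_mul_div_cancel₀' hκ _ _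
  have e1 : cq (β * c) = cq (c * Complex.I) - cq (γinf μ * (c * κ)) := by
    rw [← cq_sub]; congr 1
    have hre : γinf μ * (c * κ) = c * (γinf μ * κ) := by ring
    rw [hre, hγκ, hβval]
    field_simp
    ring
  have e2 : cq ((starRingEnd ℂ) β * d) = cq (d * Complex.I) - cq (d * κ) := by
    rw [← cq_sub]; congr 1
    rw [hβval]
    simp only [map_div₀, map_mul, map_add, map_sub, map_one, Complex.conj_I]
    rw [hκdef]
    field_simp
    ring
  rw [e1, e2]
  noncomm_ring
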